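/- Let κ be a field, let p : Fin n → ℝ≥0 and q : Fin m → ℝ≥0 be degree vectors, let A be a (q,p)-admissible m×n matrix over κ[ℝ₊], and let φ : (Fin n → κ[ℝ₊]) → (Fin m → κ[ℝ₊]) be the κ[ℝ₊]-linear map given by multiplication by A (i.e. A.mulVecLin). Then the range (image) of φ is a free and finitely generated κ[ℝ₊]-module. -/

import Mathlib

open scoped NNReal

noncomputable section

/-- The ring `κ[ℝ₊]` of polynomials with coefficients in `κ` and exponents in `ℝ≥0`,
realized as the monoid algebra of the additive monoid `ℝ≥0` over `κ`. -/
abbrev PersRing (κ : Type) [Field κ] : Type := AddMonoidAlgebra κ ℝ≥0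

/-- An `m × n` matrix over `κ[ℝ₊]` is `(q, p)`-admissible if every entry `A i j` is either `0`
or a nonzero scalar multiple of the monomial `T ^ (p j - q i)` with `q i ≤ p j`.  These are
exactly the matrices of `ℝ₊`-graded homomorphisms between graded free finitely generated
`κ[ℝ₊]`-modules with homogeneous bases of degrees `p` and `q`. -/
def IsAdmissible {κ : Type} [Field κ] {m n : ℕ} (q : Fin m → ℝ≥0) (p : Fin n → ℝ≥0)
    (A : Matrix (Fin m) (Fin n) (PersRing κ)) : Prop :=
  ∀ i j, A i j = 0 ∨ (q i ≤ p j ∧ ∃ c : κ, c ≠ 0 ∧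
    A i j = c • AddMonoidAlgebra.single (p j - q i) (1 : κ))

namespace PersRingAux

variable {κ : Type} [Field κ]

/-- A vector is homogeneous of degree `d` w.r.t. the degree vector `q`. -/
def Homog {m : ℕ} (q : Fin m → ℝ≥0) (d : ℝ≥0) (v : Fin m → PersRing κ) : Prop :=
  ∀ i, v i = 0 ∨ (q i ≤ d ∧ ∃ c : κ, c ≠ 0 ∧
    v i = AddMonoidAlgebra.single (d - q i) c)

lemma smul_single_one (c : κ) (t : ℝ≥0) :
    c • AddMonoidAlgebra.single t (1 : κ) = (AddMonoidAlgebra.single t c : PersRing κ) := by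
  rw [AddMonoidAlgebra.smul_single, smul_eq_mul, mul_one]

lemma homog_of_single {m : ℕ} {q : Fin m → ℝ≥0} {d : ℝ≥0} {i : Fin m} (hqi : q i ≤ d)
    (a : κ) (x : PersRing κ) (hx : x = AddMonoidAlgebra.single (d - q i) a) :
    x = 0 ∨ (q i ≤ d ∧ ∃ c : κ, c ≠ 0 ∧ x = AddMonoidAlgebra.single (d - q i) c) := by
  by_cases ha : a = 0
  · left; simp [hx, ha, AddMonoidAlgebra.single]
  · right; exact ⟨hqi, a, ha, hx⟩

/-- Extension by zero in the last coordinate, as a linear map. -/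
def ext0 (m : ℕ) : (Fin m → PersRing κ) →ₗ[PersRing κ] (Fin (m + 1) → PersRing κ) where
  toFun v := Fin.snoc v 0
  map_add' u v := by
    funext i
    induction i using Fin.lastCases <;> simp
  map_smul' c v := by
    funext i
    induction i using Fin.lastCases <;> simp

lemma ext0_ker (m : ℕ) : LinearMap.ker (ext0 (κ := κ) m) = ⊥ := by
  rw [LinearMap.ker_eq_bot']
  intro v hv
  funext i
  have := congrFun hv (Fin.castSucc i)
  simpa [ext0] using this

/-- One step of column reduction: subtracting a suitable monomial multiple of the
minimal-degree homogeneous vector `v₀` kills the last coordinate while preserving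
homogeneity. -/
lemma reduce_one {m : ℕ} {q : Fin (m + 1) → ℝ≥0} {d₀ d : ℝ≥0}
    {v₀ w : Fin (m + 1) → PersRing κ}
    (h₀ : Homog q d₀ v₀) (hv₀ : v₀ (Fin.last m) ≠ 0) (hw : Homog q d w)
    (hd : w (Fin.last m) ≠ 0 → d₀ ≤ d) :
    ∃ g : PersRing κ, (w - g • v₀) (Fin.last m) = 0 ∧ Homog q d (w - g • v₀) := by
  by_cases hwl : w (Fin.last m) = 0
  · exact ⟨0, by simp [hwl], by simpa using hw⟩
  · have hd' : d₀ ≤ d := hd hwl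
    rcases h₀ (Fin.last m) with h | ⟨hq₀, c₀, hc₀, hv₀l⟩
    · exact absurd h hv₀
    rcases hw (Fin.last m) with h | ⟨hqw, c, hc, hwl2⟩
    · exact absurd h hwl
    refine ⟨AddMonoidAlgebra.single (d - d₀) (c * c₀⁻¹), ?_, ?_⟩
    · have : (w - (AddMonoidAlgebra.single (d - d₀) (c * c₀⁻¹) : PersRing κ) • v₀)
          (Fin.last m)
          = w (Fin.last m)
            - (AddMonoidAlgebra.single (d - d₀) (c * c₀⁻¹) : PersRing κ) * v₀ (Fin.last m) :=
        rfl
      rw [this, hwl2, hv₀l, AddMonoidAlgebra.single_mul_single,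
        tsub_add_tsub_cancel hd' hq₀]
      rw [mul_assoc, inv_mul_cancel₀ hc₀, mul_one, sub_self]
    · intro i
      have hent : (w - (AddMonoidAlgebra.single (d - d₀) (c * c₀⁻¹) : PersRing κ) • v₀) i
          = w i - (AddMonoidAlgebra.single (d - d₀) (c * c₀⁻¹) : PersRing κ) * v₀ i := rfl
      rcases hw i with hwi | ⟨hqi, a, ha, hwi⟩ <;>
        rcases h₀ i with h0i | ⟨hqi0, b, hb, h0i⟩
      · left; rw [hent, hwi, h0i]; simp
      · -- w i = 0, v₀ i nonzero
        refine homog_of_single (hqi0.trans hd') (-(c * c₀⁻¹ * b)) _ ?_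
        rw [hent, hwi, h0i, AddMonoidAlgebra.single_mul_single,
          tsub_add_tsub_cancel hd' hqi0, zero_sub]
        simp [AddMonoidAlgebra.single, Finsupp.single_neg]
      · -- w i nonzero, v₀ i = 0
        refine homog_of_single hqi a _ ?_
        rw [hent, hwi, h0i]; simp
      · refine homog_of_single hqi (a - c * c₀⁻¹ * b) _ ?_
        rw [hent, hwi, h0i, AddMonoidAlgebra.single_mul_single,
          tsub_add_tsub_cancel hd' hqi0]
        rw [AddMonoidAlgebra.single_sub]

/-- Main lemma: the span of a finite family of homogeneous vectors admits a finite
linearly independent spanning family (Gaussian elimination on graded columns). -/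
lemma span_homog (m : ℕ) : ∀ (q : Fin m → ℝ≥0) (L : List (ℝ≥0 × (Fin m → PersRing κ))),
    (∀ x ∈ L, Homog q x.1 x.2) →
    ∃ (k : ℕ) (v : Fin k → (Fin m → PersRing κ)), LinearIndependent (PersRing κ) v ∧
      Submodule.span (PersRing κ) (Set.range v)
        = Submodule.span (PersRing κ) {w | ∃ d, (d, w) ∈ L} := by
  induction m with
  | zero =>
    intro q L _
    refine ⟨0, Fin.elim0, linearIndependent_empty_type, ?_⟩
    rw [Set.range_eq_empty, Submodule.span_empty]
    symm
    rw [Submodule.span_eq_bot]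
    rintro w ⟨d, _⟩
    exact funext fun i => i.elim0
  | succ m IH =>
    intro q L hL
    classical
    -- lifting from dimension m
    have lift : ∀ (L' : List (ℝ≥0 × (Fin (m + 1) → PersRing κ))),
        (∀ x ∈ L', Homog q x.1 x.2) → (∀ x ∈ L', x.2 (Fin.last m) = 0) →
        ∃ (k : ℕ) (v : Fin k → (Fin (m + 1) → PersRing κ)),
          LinearIndependent (PersRing κ) v ∧ (∀ i, v i (Fin.last m) = 0) ∧
          Submodule.span (PersRing κ) (Set.range v)
            = Submodule.span (PersRing κ) {w | ∃ d, (d, w) ∈ L'} := by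
      intro L' hL' hz
      obtain ⟨k, u, hu, hspan⟩ := IH (q ∘ Fin.castSucc)
        (L'.map fun x => (x.1, x.2 ∘ Fin.castSucc)) (by
          rintro ⟨d, w⟩ hx
          rw [List.mem_map] at hx
          obtain ⟨y, hy, hyx⟩ := hx
          obtain ⟨h1, h2⟩ := Prod.mk.injEq .. ▸ hyx
          intro i
          subst h1; subst h2
          exact hL' y hy (Fin.castSucc i))
      refine ⟨k, (ext0 m) ∘ u, hu.map' _ (ext0_ker m), fun i => by simp [ext0], ?_⟩
      have hrc : Set.range ((ext0 (κ := κ) m) ∘ u) = (ext0 m) '' Set.range u :=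
        Set.range_comp _ u
      rw [hrc, ← Submodule.map_span, hspan, Submodule.map_span]
      congr 1
      ext w
      constructor
      · rintro ⟨w', ⟨d, hd⟩, rfl⟩
        rw [List.mem_map] at hd
        obtain ⟨y, hy, hyx⟩ := hd
        obtain ⟨h1, h2⟩ := Prod.mk.injEq .. ▸ hyx
        refine ⟨y.1, ?_⟩
        have hey : ext0 (κ := κ) m (y.2 ∘ Fin.castSucc) = y.2 := by
          funext i
          induction i using Fin.lastCases with
          | last => simpa [ext0] using (hz y hy).symm
          | cast j => simp [ext0]
        rw [← h2, hey]
        simpa using hy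
      · rintro ⟨d, hd⟩
        refine ⟨w ∘ Fin.castSucc, ⟨d, ?_⟩, ?_⟩
        · rw [List.mem_map]
          exact ⟨(d, w), hd, rfl⟩
        · funext i
          induction i using Fin.lastCases with
          | last => simpa [ext0] using (hz (d, w) hd).symm
          | cast j => simp [ext0]
    by_cases hall : ∀ x ∈ L, x.2 (Fin.last m) = 0
    · obtain ⟨k, v, h1, _, h3⟩ := lift L hL hall
      exact ⟨k, v, h1, h3⟩
    · push_neg at hall
      obtain ⟨x₀, hx₀L, hx₀⟩ := hall
      have hfin : ({x | x ∈ L ∧ x.2 (Fin.last m) ≠ 0} :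
          Set (ℝ≥0 × (Fin (m + 1) → PersRing κ))).Finite :=
        L.finite_toSet.subset fun x hx => hx.1
      obtain ⟨⟨d₀, v₀⟩, ⟨hmemL, hne⟩, hmin⟩ :=
        Set.exists_min_image _ (fun x => x.1) hfin ⟨x₀, hx₀L, hx₀⟩
      have hv₀ : Homog q d₀ v₀ := hL _ hmemL
      have hex : ∀ x ∈ L, ∃ g : PersRing κ,
          (x.2 - g • v₀) (Fin.last m) = 0 ∧ Homog q x.1 (x.2 - g • v₀) := by
        intro x hx
        exact reduce_one hv₀ hne (hL x hx) fun h => hmin x ⟨hx, h⟩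
      set g : ℝ≥0 × (Fin (m + 1) → PersRing κ) → PersRing κ := fun x =>
        if h : ∃ g : PersRing κ,
            (x.2 - g • v₀) (Fin.last m) = 0 ∧ Homog q x.1 (x.2 - g • v₀)
        then h.choose else 0 with hgdef
      have hgspec : ∀ x ∈ L,
          (x.2 - g x • v₀) (Fin.last m) = 0 ∧ Homog q x.1 (x.2 - g x • v₀) := by
        intro x hx
        have h := hex x hx
        rw [hgdef]
        simp only [dif_pos h]
        exact h.choose_spec
      set L' := L.map (fun x => (x.1, x.2 - g x • v₀)) with hL'def
      have hL'h : ∀ y ∈ L', Homog q y.1 y.2 := by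
        rintro y hy
        rw [hL'def, List.mem_map] at hy
        obtain ⟨x, hx, rfl⟩ := hy
        exact (hgspec x hx).2
      have hL'z : ∀ y ∈ L', y.2 (Fin.last m) = 0 := by
        rintro y hy
        rw [hL'def, List.mem_map] at hy
        obtain ⟨x, hx, rfl⟩ := hy
        exact (hgspec x hx).1
      obtain ⟨k, u, hu, huz, huspan⟩ := lift L' hL'h hL'z
      refine ⟨k + 1, Fin.cons v₀ u, ?_, ?_⟩
      · refine LinearIndependent.fin_cons' v₀ u hu ?_
        rintro c y hy hcy
        have hylast : y (Fin.last m) = 0 := by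
          have hle : Submodule.span (PersRing κ) (Set.range u) ≤
              LinearMap.ker (LinearMap.proj (R := PersRing κ)
                (φ := fun _ : Fin (m + 1) => PersRing κ) (Fin.last m)) := by
            rw [Submodule.span_le]
            rintro _ ⟨i, rfl⟩
            exact huz i
          exact hle hy
        have hc := congrFun hcy (Fin.last m)
        have hc' : c * v₀ (Fin.last m) = 0 := by
          simpa [hylast] using hc
        rcases mul_eq_zero.1 hc' with h | h
        · exact h
        · exact absurd h hne
      · rw [Fin.range_cons, Submodule.span_insert, huspan]
        rw [← Submodule.span_union ({v₀} : Set _)]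
        apply le_antisymm
        · rw [Submodule.span_le]
          rintro w (rfl | ⟨d, hd⟩)
          · exact Submodule.subset_span ⟨d₀, hmemL⟩
          · rw [hL'def, List.mem_map] at hd
            obtain ⟨x, hx, hxw⟩ := hd
            obtain ⟨h1, h2⟩ := Prod.mk.injEq .. ▸ hxw
            rw [← h2]
            exact Submodule.sub_mem _
              (Submodule.subset_span ⟨x.1, by simpa using hx⟩)
              (Submodule.smul_mem _ _ (Submodule.subset_span ⟨d₀, hmemL⟩))
        · rw [Submodule.span_le]
          rintro w ⟨d, hd⟩
          have : w = (w - g (d, w) • v₀) + g (d, w) • v₀ := by abel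
          rw [this]
          refine Submodule.add_mem _ ?_ ?_
          · refine Submodule.subset_span (Set.mem_union_right _ ⟨d, ?_⟩)
            rw [hL'def, List.mem_map]
            exact ⟨(d, w), hd, rfl⟩
          · exact Submodule.smul_mem _ _
              (Submodule.subset_span (Set.mem_union_left _ rfl))

end PersRingAux

/-- **Lemma 2.5, 'in particular' part (image).**  The range of the `κ[ℝ₊]`-linear map
given by multiplication by a `(q, p)`-admissible matrix is a free and finitely generated
`κ[ℝ₊]`-module.  Note that `κ[ℝ₊]` is not a principal ideal domain, so this is not
automatic. -/
theorem range_admissible_mulVecLin_free_and_finite (κ : Type) [Field κ] {m n : ℕ}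
    (p : Fin n → ℝ≥0) (q : Fin m → ℝ≥0)
    (A : Matrix (Fin m) (Fin n) (PersRing κ)) (hA : IsAdmissible q p A) :
    Module.Free (PersRing κ) (LinearMap.range A.mulVecLin) ∧
      Module.Finite (PersRing κ) (LinearMap.range A.mulVecLin) := by
  have hfin : Module.Finite (PersRing κ) (LinearMap.range A.mulVecLin) := inferInstance
  refine ⟨?_, hfin⟩
  obtain ⟨k, v, hv, hspan⟩ := PersRingAux.span_homog m q
    (List.ofFn fun j => (p j, A.transpose j)) (by
      rintro ⟨d, w⟩ hx
      rw [List.mem_ofFn] at hx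
      obtain ⟨j, hj⟩ := hx
      obtain ⟨h1, h2⟩ := Prod.mk.injEq .. ▸ hj
      subst h1; subst h2
      intro i
      rcases hA i j with h | ⟨hq, c, hc, h⟩
      · left; exact h
      · right
        refine ⟨hq, c, hc, ?_⟩
        show A i j = AddMonoidAlgebra.single (p j - q i) c
        rw [h, PersRingAux.smul_single_one])
  have hset : {w | ∃ d, (d, w) ∈ List.ofFn fun j => (p j, A.transpose j)} = Set.range A.transpose := by
    ext w
    constructor
    · rintro ⟨d, hd⟩
      rw [List.mem_ofFn] at hd
      obtain ⟨j, hj⟩ := hd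
      obtain ⟨_, h2⟩ := Prod.mk.injEq .. ▸ hj
      exact ⟨j, h2⟩
    · rintro ⟨j, rfl⟩
      exact ⟨p j, by simp only [List.mem_ofFn]; exact ⟨j, rfl⟩⟩
  rw [Matrix.range_mulVecLin, show Set.range A.col = Set.range A.transpose from rfl, ← hset, ← hspan]
  exact Module.Free.of_basis (Module.Basis.span hv)

end
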